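/- arXiv:2007.10635 — 3 statements merged into one kernel-verified Lean document; each statement's English description precedes it below -/
import Mathlib

section
/- Assume τ ≥ 0. Then for every Λ ∈ S_{n,δ}, θ_0(Λ) ∈ Θ(Λ). -/
namespace PanUnitary

/-- `part μ i` : the `i`-th largest element (0-indexed) of the multiset `μ`, `0` beyond.
Viewing a multiset of naturals as a partition (identified up to trailing zeros),
this is the `(i+1)`-st part. -/
def part (μ : Multiset ℕ) (i : ℕ) : ℕ := ((μ.sort (· ≤ ·)).reverse).getD i 0

/-- Remove the zero parts: the canonical (zero-free) representative of a partition. -/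
def strip (μ : Multiset ℕ) : Multiset ℕ := μ.filter (fun x => 0 < x)

/-- `transpose μ j` is the `(j+1)`-st part of the transposed (conjugate) partition. -/
def transpose (μ : Multiset ℕ) (j : ℕ) : ℕ := (μ.filter (fun x => j < x)).card

/-- `Preceq f g` : the partition whose parts are given by `f` is `⪯` the one given by `g`,
i.e. `g i - 1 ≤ f i ≤ g i` for all `i`. -/
def Preceq (f g : ℕ → ℕ) : Prop := ∀ i, g i ≤ f i + 1 ∧ f i ≤ g i

/-- An integer `δ` is admissible if it is even and nonnegative, or odd and negative. -/
def IsAdmissible (δ : ℤ) : Prop := (Even δ ∧ 0 ≤ δ) ∨ (Odd δ ∧ δ < 0)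

/-- `ε = 1` if `δ` is even, `ε = 0` if `δ` is odd. -/
def eps (δ : ℤ) : ℕ := if Even δ then 1 else 0

/-- `d (d + 1) / 2` where `d = |δ|`. -/
def halfTri (δ : ℤ) : ℕ := δ.natAbs * (δ.natAbs + 1) / 2

/-- A symbol: a pair of rows of natural numbers (the strict-decrease condition is
part of the predicate `Symbol.IsUnitary`). -/
structure Symbol where
  A : List ℕ
  B : List ℕ

def Symbol.defect (Λ : Symbol) : ℤ := (Λ.A.length : ℤ) - (Λ.B.length : ℤ)

/-- The row `(a_1, …, a_m)` gives the partition with parts `(a_i - e)/2 - (m - i)`. -/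
def upsRow (L : List ℕ) (e : ℕ) : Multiset ℕ :=
  ((L.mapIdx fun i a => (a - e) / 2 - (L.length - 1 - i) : List ℕ) : Multiset ℕ)

/-- The bipartition `Υ(Λ)` (canonical zero-free representatives). -/
def Symbol.Upsilon (Λ : Symbol) : Multiset ℕ × Multiset ℕ :=
  (strip (upsRow Λ.A (eps Λ.defect)), strip (upsRow Λ.B (1 - eps Λ.defect)))

/-- `Λ` is a unitary-type symbol of (admissible) defect `δ`. -/
def Symbol.IsUnitary (Λ : Symbol) (δ : ℤ) : Prop :=
  Λ.A.Pairwise (· > ·) ∧ Λ.B.Pairwise (· > ·) ∧ Λ.defect = δ ∧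
    (∀ a ∈ Λ.A, a % 2 = eps δ) ∧ (∀ b ∈ Λ.B, b % 2 = 1 - eps δ)

/-- The rank `2(|μ| + |ν|) + d(d+1)/2` of a unitary-type symbol. -/
def Symbol.rank (Λ : Symbol) : ℕ :=
  2 * (Λ.Upsilon.1.sum + Λ.Upsilon.2.sum) + halfTri Λ.defect

/-- Equivalence of symbols: same defect and same `Υ`. -/
def Symbol.Equiv (Λ Λ' : Symbol) : Prop :=
  Λ.defect = Λ'.defect ∧ Λ.Upsilon = Λ'.Upsilon

/-- Membership in `S_{n,δ}`: a unitary-type symbol of admissible defect `δ` and rank `n`. -/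
def InS (n : ℕ) (δ : ℤ) (Λ : Symbol) : Prop :=
  IsAdmissible δ ∧ Λ.IsUnitary δ ∧ Λ.rank = n

/-- `Σ min(x,y)` over all unordered pairs of (positions of) entries of the list. -/
def pairMinSum : List ℕ → ℕ
  | [] => 0
  | x :: xs => (xs.map (fun y => min x y)).sum + pairMinSum xs

/-- All entries of a symbol (both rows). -/
def Symbol.entries (Λ : Symbol) : List ℕ := Λ.A ++ Λ.B

/-- `ord(Λ) = Σ min(x,y) − Σ_{i=1}^{⌊N/2⌋} (N − 2i)²`. -/
def Symbol.ord (Λ : Symbol) : ℤ :=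
  (pairMinSum Λ.entries : ℤ) -
    ∑ i ∈ Finset.Icc 1 (Λ.entries.length / 2),
      ((Λ.entries.length : ℤ) - 2 * (i : ℤ)) ^ 2

/-- The shift of a unitary-type symbol. -/
def Symbol.shift (Λ : Symbol) : Symbol :=
  ⟨Λ.A.map (fun a => a + 2) ++ [eps Λ.defect],
   Λ.B.map (fun b => b + 2) ++ [1 - eps Λ.defect]⟩

/-- The defect `δ'` for the second member of the dual pair. -/
def deltaPrime (n n' : ℕ) (δ : ℤ) : ℤ :=
  if Even (n + n') then (if δ = 0 then 0 else -δ + 1) else -δ - 1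

/-- `τ = ((n' − d'(d'+1)/2) − (n − d(d+1)/2)) / 2`. -/
def tau (n n' : ℕ) (δ : ℤ) : ℚ :=
  (((n' : ℚ) - (halfTri (deltaPrime n n' δ) : ℚ)) - ((n : ℚ) - (halfTri δ : ℚ))) / 2

/-- `τ` as a natural number (equal to `τ` whenever `τ` is a nonnegative integer). -/
def tauNat (n n' : ℕ) (δ : ℤ) : ℕ :=
  ((n' + halfTri δ) - (n + halfTri (deltaPrime n n' δ))) / 2

/-- The set of (canonical, zero-free) bipartitions `(μ;ν)` with
`2(|μ|+|ν|) + d(d+1)/2 = n`; equivalently `|μ|+|ν| = (n − d(d+1)/2)/2`. -/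
def BipSet (n : ℕ) (δ : ℤ) : Set (Multiset ℕ × Multiset ℕ) :=
  {p | (∀ x ∈ p.1, 0 < x) ∧ (∀ x ∈ p.2, 0 < x) ∧ 2 * (p.1.sum + p.2.sum) + halfTri δ = n}

/-- The `⪯`-conditions (on transposes) defining the relation `Θ`, at the level of
bipartitions `p = Υ(Λ)`, `q = Υ(Λ')`. -/
def PrecCond (n n' : ℕ) (p q : Multiset ℕ × Multiset ℕ) : Prop :=
  if Even (n + n') then
    Preceq (transpose p.2) (transpose q.1) ∧ Preceq (transpose q.2) (transpose p.1)
  else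
    Preceq (transpose p.1) (transpose q.2) ∧ Preceq (transpose q.1) (transpose p.2)

/-- `Θ` at the level of bipartitions (classes of symbols). -/
def ThetaB (n n' : ℕ) (δ : ℤ) (p q : Multiset ℕ × Multiset ℕ) : Prop :=
  q ∈ BipSet n' (deltaPrime n n' δ) ∧ PrecCond n n' p q

/-- `Λ' ∈ Θ(Λ)` for symbols, where `Λ ∈ S_{n,δ}`. -/
def InTheta (n n' : ℕ) (δ : ℤ) (Λ Λ' : Symbol) : Prop :=
  InS n' (deltaPrime n n' δ) Λ' ∧ PrecCond n n' Λ.Upsilon Λ'.Upsilon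

/-- `Λ' ∈ Θ(Λ)_k`. -/
def InThetaK (n n' : ℕ) (δ : ℤ) (k : ℕ) (Λ Λ' : Symbol) : Prop :=
  InTheta n n' δ Λ Λ' ∧
    (if Even (n + n') then (Λ'.Upsilon.2.sum : ℤ) = (Λ.Upsilon.1.sum : ℤ) - (k : ℤ)
     else (Λ'.Upsilon.1.sum : ℤ) = (Λ.Upsilon.2.sum : ℤ) - (k : ℤ))

/-- Remove (one copy of) the largest part. -/
def mtail (μ : Multiset ℕ) : Multiset ℕ := μ.erase (part μ 0)

/-- `θ_k` at the level of bipartitions: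
even case: `(μ;ν) ↦ (sort(ν, τ+k); sort(μ_2, …, μ_{m_1}, μ_1 − k))`;
odd case: `(μ;ν) ↦ (sort(ν_2, …, ν_{m_2}, ν_1 − k); sort(μ, τ+k))`. -/
def thetaBip (n n' : ℕ) (δ : ℤ) (k : ℕ) (p : Multiset ℕ × Multiset ℕ) :
    Multiset ℕ × Multiset ℕ :=
  if Even (n + n') then
    (strip ((tauNat n n' δ + k) ::ₘ p.2), strip ((part p.1 0 - k) ::ₘ mtail p.1))
  else
    (strip ((part p.2 0 - k) ::ₘ mtail p.2), strip ((tauNat n n' δ + k) ::ₘ p.1))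

/-- The unitary-type symbol of defect `δ` with `Υ = p`, whose first row has `m1`
entries and second row `m2` entries (valid whenever `m1, m2` are large enough). -/
def symbolOfBip (δ : ℤ) (p : Multiset ℕ × Multiset ℕ) (m1 m2 : ℕ) : Symbol :=
  ⟨List.ofFn (fun i : Fin m1 => 2 * (part p.1 (i : ℕ) + (m1 - 1 - (i : ℕ))) + eps δ),
   List.ofFn (fun j : Fin m2 => 2 * (part p.2 (j : ℕ) + (m2 - 1 - (j : ℕ))) + (1 - eps δ))⟩

/-- A canonical representative symbol of defect `δ` with `Υ = p`. -/
def canonicalSymbol (δ : ℤ) (p : Multiset ℕ × Multiset ℕ) : Symbol :=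
  symbolOfBip δ p (max p.1.card ((p.2.card : ℤ) + δ).toNat)
    (((max p.1.card ((p.2.card : ℤ) + δ).toNat : ℤ) - δ).toNat)

/-- A symbol representing the class `θ_k(Λ)`. -/
def thetaSymbol (n n' : ℕ) (δ : ℤ) (k : ℕ) (Λ : Symbol) : Symbol :=
  canonicalSymbol (deltaPrime n n' δ) (thetaBip n n' δ k Λ.Upsilon)

/-- `K(Λ)`: `μ_1` in the even case, `ν_1` in the odd case. -/
def bigK (n n' : ℕ) (Λ : Symbol) : ℕ :=
  if Even (n + n') then part Λ.Upsilon.1 0 else part Λ.Upsilon.2 0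

/-- `ord` at the level of bipartitions (well defined on classes). -/
def ordB (δ : ℤ) (p : Multiset ℕ × Multiset ℕ) : ℤ := (canonicalSymbol δ p).ord

/-- Strict lexicographic order on partitions. -/
def PartLexLt (μ ν : Multiset ℕ) : Prop :=
  ∃ i, (∀ j < i, part μ j = part ν j) ∧ part μ i < part ν i

/-- The total order on `S_{n,δ}` (and on `S_{n',δ'}`), at the level of bipartitions;
it depends only on the parity of `n + n'`. -/
def BLt (n n' : ℕ) (p q : Multiset ℕ × Multiset ℕ) : Prop :=
  if Even (n + n') then
    p.1.sum < q.1.sum ∨ (p.1.sum = q.1.sum ∧ PartLexLt p.1 q.1) ∨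
      (p.1 = q.1 ∧ PartLexLt p.2 q.2)
  else
    p.2.sum < q.2.sum ∨ (p.2.sum = q.2.sum ∧ PartLexLt p.2 q.2) ∨
      (p.2 = q.2 ∧ PartLexLt p.1 q.1)

/-- `q ∈ Θ♭(p)` relative to a given partial function `bar` (playing the role of `θ̄`). -/
def InFlat (n n' : ℕ) (δ : ℤ)
    (bar : Multiset ℕ × Multiset ℕ → Option (Multiset ℕ × Multiset ℕ))
    (p q : Multiset ℕ × Multiset ℕ) : Prop :=
  ThetaB n n' δ p q ∧ ∀ r ∈ BipSet n δ, BLt n n' r p → bar r ≠ some q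

/-- `bar` is the partial function `θ̄` defined by recursion along the total order:
on each `p ∈ S_{n,δ}`, if `Θ♭(p) ≠ ∅` then `bar p` is defined and is the smallest
element (w.r.t. the total order) of maximal `ord` in `Θ♭(p)`. -/
def IsThetaBar (n n' : ℕ) (δ : ℤ)
    (bar : Multiset ℕ × Multiset ℕ → Option (Multiset ℕ × Multiset ℕ)) : Prop :=
  (∀ p, p ∉ BipSet n δ → bar p = none) ∧
  ∀ p ∈ BipSet n δ,
    ((∃ q, InFlat n n' δ bar p q) → ∃ q, bar p = some q) ∧
    ∀ q, bar p = some q →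
      InFlat n n' δ bar p q ∧
      (∀ r, InFlat n n' δ bar p r →
        ordB (deltaPrime n n' δ) r ≤ ordB (deltaPrime n n' δ) q) ∧
      (∀ r, InFlat n n' δ bar p r →
        ordB (deltaPrime n n' δ) r = ordB (deltaPrime n n' δ) q → r ≠ q → BLt n n' q r)


namespace PanUnitaryAux
open PanUnitary

lemma part_anti (μ : Multiset ℕ) {i j : ℕ} (h : i ≤ j) : part μ j ≤ part μ i := by
  unfold part
  set L := (μ.sort (· ≤ ·)).reverse with hL
  by_cases hj : j < L.length
  · have hi : i < L.length := lt_of_le_of_lt h hj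
    rw [List.getD_eq_getElem _ _ hj, List.getD_eq_getElem _ _ hi]
    rcases eq_or_lt_of_le h with rfl | hlt
    · exact le_refl _
    · have hs : L.Pairwise (· ≥ ·) := by
        rw [hL, List.pairwise_reverse]
        exact (Multiset.pairwise_sort (s := μ) (r := (· ≤ ·)) : List.Pairwise _ _)
      exact List.pairwise_iff_getElem.mp hs i j hi hj hlt
  · rw [List.getD_eq_default _ _ (not_lt.mp hj)]
    exact Nat.zero_le _

lemma part_mem {μ : Multiset ℕ} (hμ : μ ≠ 0) : part μ 0 ∈ μ := by
  unfold part
  have hlen : 0 < (μ.sort (· ≤ ·)).reverse.length := by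
    simp only [List.length_reverse, Multiset.length_sort]
    exact Multiset.card_pos.mpr hμ
  rw [List.getD_eq_getElem _ _ hlen]
  have : (μ.sort (· ≤ ·)).reverse[0] ∈ (μ.sort (· ≤ ·)).reverse := List.getElem_mem _
  rw [List.mem_reverse, Multiset.mem_sort] at this
  exact this

lemma strip_eq_self {μ : Multiset ℕ} (h : ∀ x ∈ μ, 0 < x) : strip μ = μ :=
  Multiset.filter_eq_self.mpr h

lemma mem_strip_pos {μ : Multiset ℕ} {x : ℕ} (hx : x ∈ strip μ) : 0 < x :=
  (Multiset.mem_filter.mp hx).2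

lemma strip_sum (μ : Multiset ℕ) : (strip μ).sum = μ.sum := by
  conv_rhs => rw [← Multiset.filter_add_not (fun x => 0 < x) μ]
  rw [Multiset.sum_add, strip]
  have : ∀ x ∈ Multiset.filter (fun x => ¬ 0 < x) μ, x = 0 := by
    intro x hx; have := (Multiset.mem_filter.mp hx).2; omega
  rw [Multiset.sum_eq_zero this, add_zero]

lemma transpose_strip (μ : Multiset ℕ) (j : ℕ) : transpose (strip μ) j = transpose μ j := by
  unfold transpose strip
  rw [Multiset.filter_filter]
  congr 1
  apply Multiset.filter_congr
  intro x _
  constructor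
  · rintro ⟨h, _⟩; exact h
  · intro h; exact ⟨h, by omega⟩

lemma transpose_cons_le (a : ℕ) (μ : Multiset ℕ) (j : ℕ) :
    transpose μ j ≤ transpose (a ::ₘ μ) j ∧ transpose (a ::ₘ μ) j ≤ transpose μ j + 1 := by
  unfold transpose
  rw [Multiset.filter_cons]
  split <;> simp

lemma preceq_refl (f : ℕ → ℕ) : Preceq f f := fun i => ⟨Nat.le_succ _, le_refl _⟩

lemma preceq_cons (a : ℕ) (μ : Multiset ℕ) : Preceq (transpose μ) (transpose (a ::ₘ μ)) := by
  intro j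
  have := transpose_cons_le a μ j
  exact ⟨this.2, this.1⟩

/-- strip of (part μ 0 ::ₘ mtail μ) is μ when μ is zero-free. -/
lemma strip_head_tail {μ : Multiset ℕ} (h : ∀ x ∈ μ, 0 < x) :
    strip (part μ 0 ::ₘ mtail μ) = μ := by
  by_cases hμ : μ = 0
  · subst hμ
    have h0 : part (0 : Multiset ℕ) 0 = 0 := by
      unfold part; simp
    rw [mtail, h0]
    rw [strip]
    rw [show ((0:ℕ) ::ₘ Multiset.erase 0 0) = {0} by simp]
    decide
  · rw [mtail, Multiset.cons_erase (part_mem hμ)]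
    exact strip_eq_self h

end PanUnitaryAux
namespace PanUnitaryAux
open PanUnitary

lemma ofFn_getD {L : List ℕ} {m : ℕ} (h : L.length ≤ m) :
    List.ofFn (fun i : Fin m => L.getD i 0) = L ++ List.replicate (m - L.length) 0 := by
  apply List.ext_getElem
  · simp; omega
  · intro i hi _
    simp only [List.getElem_ofFn]
    by_cases hil : i < L.length
    · rw [List.getElem_append_left hil, List.getD_eq_getElem _ _ hil]
    · rw [List.getD_eq_default _ _ (not_lt.mp hil),
        List.getElem_append_right (not_lt.mp hil), List.getElem_replicate]

lemma ofFn_part (μ : Multiset ℕ) {m : ℕ} (h : μ.card ≤ m) :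
    ((List.ofFn fun i : Fin m => part μ i) : Multiset ℕ)
      = μ + Multiset.replicate (m - μ.card) 0 := by
  have hlen : (μ.sort (· ≤ ·)).reverse.length = μ.card := by simp
  have := ofFn_getD (L := (μ.sort (· ≤ ·)).reverse) (m := m) (by rw [hlen]; exact h)
  rw [show (fun i : Fin m => part μ (i : ℕ)) = fun i : Fin m => (μ.sort (· ≤ ·)).reverse.getD i 0
    from rfl, this]
  rw [hlen, ← Multiset.coe_add, Multiset.coe_replicate]
  congr 1
  rw [show ((μ.sort (· ≤ ·)).reverse : Multiset ℕ) = ((μ.sort (· ≤ ·)) : Multiset ℕ) from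
    Quot.sound (List.reverse_perm _), Multiset.sort_eq]

lemma eps_le_one (δ : ℤ) : eps δ ≤ 1 := by unfold eps; split <;> simp

lemma row_sorted (g : ℕ → ℕ) (m e : ℕ) (hg : ∀ i j, i ≤ j → g j ≤ g i) :
    (List.ofFn fun i : Fin m => 2 * (g i + (m - 1 - (i : ℕ))) + e).Pairwise (· > ·) := by
  rw [List.pairwise_ofFn]
  intro i j hij
  have h1 : g (j : ℕ) ≤ g (i : ℕ) := hg _ _ (le_of_lt hij)
  have h2 : (j : ℕ) < m := j.isLt
  have h3 : (i : ℕ) < (j : ℕ) := hij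
  simp only [gt_iff_lt]
  omega

lemma upsRow_ofFn (g : ℕ → ℕ) (m e : ℕ) :
    upsRow (List.ofFn fun i : Fin m => 2 * (g i + (m - 1 - (i : ℕ))) + e) e
      = ((List.ofFn fun i : Fin m => g (i : ℕ)) : Multiset ℕ) := by
  unfold upsRow
  congr 1
  apply List.ext_getElem
  · simp
  · intro i hi hi2
    have hlen : (List.ofFn fun i : Fin m => 2 * (g i + (m - 1 - (i : ℕ))) + e).length = m := by
      simp
    have him : i < m := by simpa using hi2
    have := List.getElem_mapIdx (l := List.ofFn fun i : Fin m => 2 * (g i + (m - 1 - (i : ℕ))) + e)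
      (f := fun i a => (a - e) / 2 - ((List.ofFn fun i : Fin m =>
        2 * (g i + (m - 1 - (i : ℕ))) + e).length - 1 - i)) (i := i) (h := by simpa using him)
    rw [this]
    simp only [List.get_eq_getElem, List.getElem_ofFn, hlen]
    rw [Nat.add_sub_cancel, Nat.mul_div_cancel_left _ (by norm_num : 0 < 2)]
    omega

end PanUnitaryAux
namespace PanUnitaryAux
open PanUnitary

lemma strip_add_replicate (μ : Multiset ℕ) (k : ℕ) :
    strip (μ + Multiset.replicate k 0) = strip μ := by
  unfold strip
  rw [Multiset.filter_add]
  have : Multiset.filter (fun x => 0 < x) (Multiset.replicate k 0) = 0 := by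
    rw [Multiset.filter_eq_nil]
    intro a ha
    rw [Multiset.eq_of_mem_replicate ha]
    omega
  rw [this, add_zero]

lemma symbolOfBip_spec (δ : ℤ) (p : Multiset ℕ × Multiset ℕ)
    (h1 : ∀ x ∈ p.1, 0 < x) (h2 : ∀ x ∈ p.2, 0 < x)
    {m1 m2 : ℕ} (hm1 : p.1.card ≤ m1) (hm2 : p.2.card ≤ m2)
    (hd : (m1 : ℤ) - (m2 : ℤ) = δ) :
    (symbolOfBip δ p m1 m2).IsUnitary δ ∧ (symbolOfBip δ p m1 m2).Upsilon = p := by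
  have hdef : (symbolOfBip δ p m1 m2).defect = δ := by
    unfold symbolOfBip Symbol.defect
    simpa using hd
  have heps := eps_le_one δ
  constructor
  · refine ⟨?_, ?_, hdef, ?_, ?_⟩
    · exact row_sorted (part p.1) m1 (eps δ) (fun i j h => part_anti p.1 h)
    · exact row_sorted (part p.2) m2 (1 - eps δ) (fun i j h => part_anti p.2 h)
    · intro a ha
      simp only [symbolOfBip, List.mem_ofFn, Set.mem_range] at ha
      obtain ⟨i, rfl⟩ := ha
      omega
    · intro b hb
      simp only [symbolOfBip, List.mem_ofFn, Set.mem_range] at hb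
      obtain ⟨j, rfl⟩ := hb
      omega
  · unfold Symbol.Upsilon
    rw [hdef]
    have hA : (symbolOfBip δ p m1 m2).A
        = List.ofFn fun i : Fin m1 => 2 * (part p.1 i + (m1 - 1 - (i : ℕ))) + eps δ := rfl
    have hB : (symbolOfBip δ p m1 m2).B
        = List.ofFn fun j : Fin m2 => 2 * (part p.2 j + (m2 - 1 - (j : ℕ))) + (1 - eps δ) := rfl
    rw [hA, hB, upsRow_ofFn, upsRow_ofFn, ofFn_part p.1 hm1, ofFn_part p.2 hm2,
      strip_add_replicate, strip_add_replicate, strip_eq_self h1, strip_eq_self h2]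

lemma canonicalSymbol_spec (δ : ℤ) (p : Multiset ℕ × Multiset ℕ)
    (h1 : ∀ x ∈ p.1, 0 < x) (h2 : ∀ x ∈ p.2, 0 < x) :
    (canonicalSymbol δ p).IsUnitary δ ∧ (canonicalSymbol δ p).Upsilon = p ∧
      (canonicalSymbol δ p).rank = 2 * (p.1.sum + p.2.sum) + halfTri δ := by
  set m1 := max p.1.card ((p.2.card : ℤ) + δ).toNat with hm1def
  set m2 := (((m1 : ℤ) - δ)).toNat with hm2def
  have hm1 : p.1.card ≤ m1 := le_max_left _ _
  have h1' : ((p.2.card : ℤ) + δ).toNat ≤ m1 := le_max_right _ _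
  have h2' : (p.2.card : ℤ) + δ ≤ (((p.2.card : ℤ) + δ).toNat : ℤ) := Int.self_le_toNat _
  have h3' : (p.2.card : ℤ) + δ ≤ (m1 : ℤ) := le_trans h2' (by exact_mod_cast h1')
  have hm2Z : (m2 : ℤ) = (m1 : ℤ) - δ := Int.toNat_of_nonneg (by omega)
  have hm2 : p.2.card ≤ m2 := by omega
  have hd : (m1 : ℤ) - (m2 : ℤ) = δ := by omega
  have hcan : canonicalSymbol δ p = symbolOfBip δ p m1 m2 := by rw [canonicalSymbol, hm2def, hm1def, Nat.cast_max]
  obtain ⟨hu, hups⟩ := symbolOfBip_spec δ p h1 h2 hm1 hm2 hd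
  rw [hcan]
  refine ⟨hu, hups, ?_⟩
  unfold Symbol.rank
  rw [hups, hu.2.2.1]

end PanUnitaryAux
namespace PanUnitaryAux
open PanUnitary

lemma two_halfTri (δ : ℤ) : 2 * halfTri δ = δ.natAbs * (δ.natAbs + 1) := by
  unfold halfTri
  rw [Nat.mul_div_cancel' (even_iff_two_dvd.mp (Nat.even_mul_succ_self _))]

lemma deltaPrime_admissible {n n' : ℕ} {δ : ℤ} (h : IsAdmissible δ) :
    IsAdmissible (deltaPrime n n' δ) := by
  unfold deltaPrime IsAdmissible at *
  rw [Int.even_iff, Int.odd_iff] at *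
  split
  · split
    · left; omega
    · omega
  · omega

lemma halfTri_parity {n n' : ℕ} {δ : ℤ} (h : IsAdmissible δ)
    (hn : (n + halfTri δ) % 2 = 0) :
    (n' + halfTri (deltaPrime n n' δ)) % 2 = 0 := by
  have e1 := two_halfTri δ
  have e2 := two_halfTri (deltaPrime n n' δ)
  set d := δ.natAbs with hd
  set d' := (deltaPrime n n' δ).natAbs with hd'
  have hdpar : δ % 2 = 0 ∨ δ % 2 ≠ 0 := em _
  unfold IsAdmissible at h
  rw [Int.even_iff, Int.odd_iff] at h
  have hnn : Even (n + n') ∨ ¬ Even (n + n') := em _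
  rcases hnn with hpar | hpar
  · have hnpar : (n + n') % 2 = 0 := Nat.even_iff.mp hpar
    rcases h with ⟨he, hge⟩ | ⟨ho, hlt⟩
    · by_cases h0 : δ = 0
      · have : deltaPrime n n' δ = 0 := by unfold deltaPrime; rw [if_pos hpar, if_pos h0]
        rw [this] at hd'
        have hz1 : d' = 0 := by simp [hd']
        have hz2 : d = 0 := by simp [hd, h0]
        rw [hz1] at e2
        rw [hz2] at e1
        omega
      · have hδ2 : 2 ≤ δ := by omega
        have hdp : deltaPrime n n' δ = -δ + 1 := by unfold deltaPrime; rw [if_pos hpar, if_neg h0]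
        have hd'd : d' + 1 = d := by
          rw [hd', hdp, hd]; omega
        have expand : d * (d + 1) = (d' * (d' + 1)) + 2 * (d' + 1) := by
          rw [← hd'd]; ring
        omega
    · have hdp : deltaPrime n n' δ = -δ + 1 := by
        unfold deltaPrime; rw [if_pos hpar, if_neg (by omega)]
      have hd'd : d' = d + 1 := by rw [hd', hdp, hd]; omega
      have expand : d' * (d' + 1) = d * (d + 1) + 2 * (d + 1) := by rw [hd'd]; ring
      have : d % 2 = 1 := by omega
      omega
  · have hnpar : (n + n') % 2 = 1 := by
      rcases Nat.even_or_odd (n + n') with h | h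
      · exact absurd h hpar
      · exact Nat.odd_iff.mp h
    have hdp : deltaPrime n n' δ = -δ - 1 := by unfold deltaPrime; rw [if_neg hpar]
    rcases h with ⟨he, hge⟩ | ⟨ho, hlt⟩
    · have hd'd : d' = d + 1 := by rw [hd', hdp, hd]; omega
      have expand : d' * (d' + 1) = d * (d + 1) + 2 * (d + 1) := by rw [hd'd]; ring
      have : d % 2 = 0 := by omega
      omega
    · have hd'd : d' + 1 = d := by rw [hd', hdp, hd]; omega
      have expand : d * (d + 1) = (d' * (d' + 1)) + 2 * (d' + 1) := by rw [← hd'd]; ring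
      have : d % 2 = 1 := by omega
      omega

lemma tau_eq {n n' : ℕ} {δ : ℤ} (h : IsAdmissible δ)
    (hn : (n + halfTri δ) % 2 = 0) (hτ : 0 ≤ tau n n' δ) :
    2 * tauNat n n' δ + (n + halfTri (deltaPrime n n' δ)) = n' + halfTri δ := by
  have hge : n + halfTri (deltaPrime n n' δ) ≤ n' + halfTri δ := by
    rw [tau, le_div_iff₀ (by norm_num : (0:ℚ) < 2)] at hτ
    have : ((n : ℚ)) + (halfTri (deltaPrime n n' δ) : ℚ) ≤ (n' : ℚ) + (halfTri δ : ℚ) := by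
      linarith
    exact_mod_cast this
  have hpar := halfTri_parity (n' := n') h hn
  unfold tauNat
  omega

end PanUnitaryAux
open PanUnitaryAux

/-- If \`τ ≥ 0\` then \`θ_0(Λ) ∈ Θ(Λ)\` for every \`Λ ∈ S_{n,δ}\`. -/

theorem statement4 (n n' : ℕ) (δ : ℤ) (hτ : 0 ≤ tau n n' δ)
    (Λ : Symbol) (hΛ : InS n δ Λ) :
    InTheta n n' δ Λ (thetaSymbol n n' δ 0 Λ) := by
  obtain ⟨hadm, hunit, hrank⟩ := hΛ
  have hp1 : ∀ x ∈ Λ.Upsilon.1, 0 < x := by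
    simp only [Symbol.Upsilon]
    exact fun x hx => mem_strip_pos hx
  have hp2 : ∀ x ∈ Λ.Upsilon.2, 0 < x := by
    simp only [Symbol.Upsilon]
    exact fun x hx => mem_strip_pos hx
  have hrank' : 2 * (Λ.Upsilon.1.sum + Λ.Upsilon.2.sum) + halfTri δ = n := by
    rw [Symbol.rank, hunit.2.2.1] at hrank
    exact hrank
  have hn2 : (n + halfTri δ) % 2 = 0 := by omega
  have hteq := tau_eq hadm hn2 hτ
  set q := thetaBip n n' δ 0 Λ.Upsilon with hqdef
  have hts : thetaSymbol n n' δ 0 Λ = canonicalSymbol (deltaPrime n n' δ) q := by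
    rw [thetaSymbol, hqdef]
  by_cases hpar : Even (n + n')
  · have hq : q = (strip (tauNat n n' δ ::ₘ Λ.Upsilon.2),
        strip (part Λ.Upsilon.1 0 ::ₘ mtail Λ.Upsilon.1)) := by
      rw [hqdef, thetaBip, if_pos hpar]
      simp
    have hq2eq : q.2 = Λ.Upsilon.1 := by rw [hq]; exact strip_head_tail hp1
    have hq1eq : q.1 = strip (tauNat n n' δ ::ₘ Λ.Upsilon.2) := by rw [hq]
    have hq1 : ∀ x ∈ q.1, 0 < x := by
      rw [hq1eq]; exact fun x hx => mem_strip_pos hx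
    have hq2 : ∀ x ∈ q.2, 0 < x := by rw [hq2eq]; exact hp1
    obtain ⟨hu, hups, hrk⟩ := canonicalSymbol_spec (deltaPrime n n' δ) q hq1 hq2
    have hsum1 : q.1.sum = tauNat n n' δ + Λ.Upsilon.2.sum := by
      rw [hq1eq, strip_sum, Multiset.sum_cons]
    have hsum2 : q.2.sum = Λ.Upsilon.1.sum := by rw [hq2eq]
    refine ⟨⟨deltaPrime_admissible hadm, ?_, ?_⟩, ?_⟩
    · rw [hts]; exact hu
    · rw [hts, hrk, hsum1, hsum2]; omega
    · rw [hts, hups, PrecCond, if_pos hpar]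
      constructor
      · intro i
        rw [hq1eq, transpose_strip]
        exact preceq_cons _ _ i
      · intro i
        rw [hq2eq]
        exact preceq_refl _ i
  · have hq : q = (strip (part Λ.Upsilon.2 0 ::ₘ mtail Λ.Upsilon.2),
        strip (tauNat n n' δ ::ₘ Λ.Upsilon.1)) := by
      rw [hqdef, thetaBip, if_neg hpar]
      simp
    have hq1eq : q.1 = Λ.Upsilon.2 := by rw [hq]; exact strip_head_tail hp2
    have hq2eq : q.2 = strip (tauNat n n' δ ::ₘ Λ.Upsilon.1) := by rw [hq]
    have hq1 : ∀ x ∈ q.1, 0 < x := by rw [hq1eq]; exact hp2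
    have hq2 : ∀ x ∈ q.2, 0 < x := by
      rw [hq2eq]; exact fun x hx => mem_strip_pos hx
    obtain ⟨hu, hups, hrk⟩ := canonicalSymbol_spec (deltaPrime n n' δ) q hq1 hq2
    have hsum1 : q.1.sum = Λ.Upsilon.2.sum := by rw [hq1eq]
    have hsum2 : q.2.sum = tauNat n n' δ + Λ.Upsilon.1.sum := by
      rw [hq2eq, strip_sum, Multiset.sum_cons]
    refine ⟨⟨deltaPrime_admissible hadm, ?_, ?_⟩, ?_⟩
    · rw [hts]; exact hu
    · rw [hts, hrk, hsum1, hsum2]; omega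
    · rw [hts, hups, PrecCond, if_neg hpar]
      constructor
      · intro i
        rw [hq2eq, transpose_strip]
        exact preceq_cons _ _ i
      · intro i
        rw [hq1eq]
        exact preceq_refl _ i

end PanUnitary
end

section
/- Assume n + n' is even and τ ≥ 0. Let Λ ∈ S_{n,δ} with Υ(Λ) = (μ;ν), μ = (μ_1 ≥ … ≥ μ_{m_1}), ν = (ν_1 ≥ … ≥ ν_{m_2}), and μ_1 ≥ 1, and for 0 ≤ k ≤ μ_1 represent θ_k(Λ) by the unitary-type symbol whose first row has m_2 + 1 entries and whose second row has m_2 + 1 − δ' entries. Then for each 0 ≤ k < μ_1 there are an entry α_k of the first row and an entry β_k of the second row of θ_k(Λ) such that, as multisets, the first row of θ_{k+1}(Λ) is obtained from that of θ_k(Λ) by replacing one occurrence of α_k by α_k + 2 and the second row is obtained by replacing one occurrence of β_k by β_k − 2. Moreover, all α_k have the same parity and α_0 < α_1 < … < α_{μ_1−1}; all β_k have the same parity and β_0 > β_1 > … > β_{μ_1−1}; and α_k and β_{k'} have opposite parities for all k, k'. -/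
namespace PanUnitary

private lemma lt_getD_iff_aux : ∀ (l : List ℕ), l.Pairwise (· ≥ ·) → ∀ (i t : ℕ),
    (t < l.getD i 0 ↔ i < l.countP (fun x => decide (t < x)))
  | [], _, i, t => by simp
  | x :: xs, h, i, t => by
    have hx : ∀ y ∈ xs, y ≤ x := (List.pairwise_cons.mp h).1
    have hxs := (List.pairwise_cons.mp h).2
    have IH := lt_getD_iff_aux xs hxs
    by_cases hxt : t < x
    · cases i with
      | zero => simp [List.countP_cons, hxt]
      | succ n =>
        rw [List.getD_cons_succ, IH n t, List.countP_cons,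
          if_pos (by simpa using hxt)]
        omega
    · have hz : xs.countP (fun x => decide (t < x)) = 0 := by
        rw [List.countP_eq_zero]
        intro a ha
        simp only [decide_eq_true_eq]
        exact fun hc => hxt (lt_of_lt_of_le hc (hx a ha))
      have hif : (if (fun x => decide (t < x)) x = true then 1 else 0) = 0 := by
        simp [hxt]
      cases i with
      | zero =>
        simp only [List.getD_cons_zero, List.countP_cons, hz, hif]
        simp [hxt]
      | succ n =>
        rw [List.getD_cons_succ, IH n t, List.countP_cons, hz, hif]
        omega
    termination_by l => l.length

lemma part_lt_iff (μ : Multiset ℕ) (i t : ℕ) :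
    t < part μ i ↔ i < Multiset.card (μ.filter (fun x => t < x)) := by
  have hsorted : ((μ.sort (· ≤ ·)).reverse).Pairwise (· ≥ ·) := by
    rw [List.pairwise_reverse]
    exact Multiset.pairwise_sort μ (· ≤ ·)
  rw [part, lt_getD_iff_aux _ hsorted i t]
  have h2 : ((μ.sort (· ≤ ·)).reverse).countP (fun x => decide (t < x))
      = Multiset.card (μ.filter (fun x => t < x)) := by
    rw [← Multiset.countP_eq_card_filter]
    have h1 : ((μ.sort (· ≤ ·)).reverse).countP (fun x => decide (t < x))
        = (μ.sort (· ≤ ·)).countP (fun x => decide (t < x)) :=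
      (List.reverse_perm _).countP_eq _
    rw [h1, ← Multiset.coe_countP]
    congr 1
    exact Multiset.sort_eq _ _
  rw [h2]

private lemma eq_of_lt_iff {a b : ℕ} (h : ∀ t, t < a ↔ t < b) : a = b := by
  rcases Nat.lt_trichotomy a b with hc | hc | hc
  · exact absurd ((h a).mpr hc) (lt_irrefl a)
  · exact hc
  · exact absurd ((h b).mp hc) (lt_irrefl b)

private lemma filter_card_mono (ρ : Multiset ℕ) (p q : ℕ → Prop) [DecidablePred p]
    [DecidablePred q] (h : ∀ x, p x → q x) :
    Multiset.card (ρ.filter p) ≤ Multiset.card (ρ.filter q) :=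
  Multiset.card_le_card (Multiset.monotone_filter_right ρ h)

lemma part_strip (μ : Multiset ℕ) (i : ℕ) : part (strip μ) i = part μ i := by
  apply eq_of_lt_iff
  intro t
  rw [part_lt_iff, part_lt_iff, strip, Multiset.filter_filter]
  have h : Multiset.filter (fun a => t < a ∧ 0 < a) μ = Multiset.filter (fun x => t < x) μ :=
    Multiset.filter_congr (fun x _ => by omega)
  rw [h]

lemma part_mem (μ : Multiset ℕ) (h : 0 < part μ 0) : part μ 0 ∈ μ := by
  rw [part] at h ⊢
  cases hl : (μ.sort (· ≤ ·)).reverse with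
  | nil => rw [hl] at h; simp at h
  | cons x xs =>
    simp only [hl, List.getD_cons_zero]
    have hx : x ∈ (μ.sort (· ≤ ·)).reverse := hl ▸ List.mem_cons_self
    rw [List.mem_reverse, Multiset.mem_sort] at hx
    exact hx

lemma part_cons_eq (ρ : Multiset ℕ) (u p : ℕ)
    (h1 : Multiset.card (ρ.filter (fun x => u < x)) ≤ p)
    (h2 : p ≤ Multiset.card (ρ.filter (fun x => u ≤ x))) :
    part (u ::ₘ ρ) p = u := by
  have hub : ¬ u < part (u ::ₘ ρ) p := by
    rw [part_lt_iff, Multiset.filter_cons, if_neg (lt_irrefl u), zero_add]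
    omega
  cases u with
  | zero => omega
  | succ v =>
    have hlb : v < part ((v+1) ::ₘ ρ) p := by
      rw [part_lt_iff, Multiset.filter_cons, if_pos (Nat.lt_succ_self v)]
      have heq : (ρ.filter (fun x => v < x)) = (ρ.filter (fun x => v + 1 ≤ x)) :=
        Multiset.filter_congr (fun x _ => by omega)
      have hc := congrArg Multiset.card heq
      simp only [Multiset.card_add, Multiset.card_singleton]
      omega
    omega

lemma part_cons_succ_eq (ρ : Multiset ℕ) (t i : ℕ) :
    part ((t+1) ::ₘ ρ) i
      = part (t ::ₘ ρ) i
        + (if i = Multiset.card (ρ.filter (fun x => t < x)) then 1 else 0) := by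
  by_cases hip : i = Multiset.card (ρ.filter (fun x => t < x))
  · rw [if_pos hip]
    have e1 : part (t ::ₘ ρ) i = t := by
      rw [hip]
      exact part_cons_eq ρ t _ le_rfl (filter_card_mono ρ _ _ (fun x hx => le_of_lt hx))
    have e2 : part ((t+1) ::ₘ ρ) i = t + 1 := by
      apply part_cons_eq ρ (t+1) i
      · rw [hip]
        exact filter_card_mono ρ _ _ (fun x hx => by omega)
      · have heq : (ρ.filter (fun x => t < x)) = (ρ.filter (fun x => t + 1 ≤ x)) :=
          Multiset.filter_congr (fun x _ => by omega)
        have hc := congrArg Multiset.card heq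
        omega
    rw [e1, e2]
  · rw [if_neg hip]
    apply eq_of_lt_iff
    intro s
    simp only [add_zero]
    rw [part_lt_iff, part_lt_iff, Multiset.filter_cons, Multiset.filter_cons]
    rcases Nat.lt_trichotomy s t with hst | hst | hst
    · rw [if_pos hst, if_pos (by omega : s < t + 1)]
      simp [Multiset.card_add]
    · subst hst
      rw [if_neg (lt_irrefl s), if_pos (Nat.lt_succ_self s), zero_add]
      simp only [Multiset.card_add, Multiset.card_singleton]
      omega
    · rw [if_neg (by omega : ¬ s < t), if_neg (by omega : ¬ s < t + 1)]

private lemma coe_eq_getElem_cons_eraseIdx :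
    ∀ (l : List ℕ) (n : ℕ), n < l.length →
      (l : Multiset ℕ) = l[n]! ::ₘ (l.eraseIdx n : Multiset ℕ)
  | a :: xs, 0, _ => by simp
  | a :: xs, n+1, hn => by
    have hn' : n < xs.length := by simpa using hn
    have IH := coe_eq_getElem_cons_eraseIdx xs n hn'
    have hg : (a :: xs)[n+1]! = xs[n]! := by
      rw [getElem!_pos (a :: xs) (n+1) hn, getElem!_pos xs n hn']
      simp
    rw [hg, List.eraseIdx_cons_succ, ← Multiset.cons_coe, ← Multiset.cons_coe, IH,
      Multiset.cons_swap]

private lemma coe_set_eq_cons_eraseIdx :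
    ∀ (l : List ℕ) (n : ℕ), n < l.length → ∀ (v : ℕ),
      ((l.set n v : List ℕ) : Multiset ℕ) = v ::ₘ (l.eraseIdx n : Multiset ℕ)
  | a :: xs, 0, _, v => by simp
  | a :: xs, n+1, hn, v => by
    have IH := coe_set_eq_cons_eraseIdx xs n (by simpa using hn) v
    rw [List.set_cons_succ, List.eraseIdx_cons_succ, ← Multiset.cons_coe,
      ← Multiset.cons_coe, IH, Multiset.cons_swap]

lemma row_step (m e : ℕ) (ρ : Multiset ℕ) (t : ℕ)
    (hp : Multiset.card (ρ.filter (fun x => t < x)) < m) :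
    ∃ C : Multiset ℕ,
      ((List.ofFn fun i : Fin m => 2 * (part (t ::ₘ ρ) (i:ℕ) + (m - 1 - (i:ℕ))) + e : List ℕ) : Multiset ℕ)
        = (2 * (t + (m - 1 - Multiset.card (ρ.filter (fun x => t < x)))) + e) ::ₘ C ∧
      ((List.ofFn fun i : Fin m => 2 * (part ((t+1) ::ₘ ρ) (i:ℕ) + (m - 1 - (i:ℕ))) + e : List ℕ) : Multiset ℕ)
        = (2 * (t + (m - 1 - Multiset.card (ρ.filter (fun x => t < x)))) + e + 2) ::ₘ C := by
  set p := Multiset.card (ρ.filter (fun x => t < x)) with hpdef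
  set L : List ℕ := List.ofFn fun i : Fin m => 2 * (part (t ::ₘ ρ) (i:ℕ) + (m - 1 - (i:ℕ))) + e
    with hL
  have hlen : L.length = m := by simp [hL]
  have hplen : p < L.length := by omega
  have hpt : part (t ::ₘ ρ) p = t :=
    part_cons_eq ρ t p le_rfl (filter_card_mono ρ _ _ (fun x hx => le_of_lt hx))
  have hLp : L[p]! = 2 * (t + (m - 1 - p)) + e := by
    rw [getElem!_pos L p hplen]
    simp only [hL, List.getElem_ofFn, Fin.val_mk, hpt]
  have hset : (List.ofFn fun i : Fin m => 2 * (part ((t+1) ::ₘ ρ) (i:ℕ) + (m - 1 - (i:ℕ))) + e)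
      = L.set p (2 * (t + (m - 1 - p)) + e + 2) := by
    apply List.ext_getElem (by simp [hL])
    intro i h1 h2
    have hi : i < m := by
      rw [List.length_set, hlen] at h2; exact h2
    have hLi : L[i] = 2 * (part (t ::ₘ ρ) i + (m - 1 - i)) + e := by
      simp only [hL, List.getElem_ofFn, Fin.val_mk]
    have hcs := part_cons_succ_eq ρ t i
    rw [List.getElem_ofFn, List.getElem_set]
    simp only [Fin.val_mk]
    by_cases hip : p = i
    · rw [if_pos hip, hcs, if_pos (by omega : i = Multiset.card (Multiset.filter (fun x => t < x) ρ)), ← hip, hpt]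
      ring
    · rw [if_neg hip, hLi, hcs,
        if_neg (by omega : ¬ i = Multiset.card (Multiset.filter (fun x => t < x) ρ)), Nat.add_zero]
  refine ⟨(L.eraseIdx p : Multiset ℕ), ?_, ?_⟩
  · have h := coe_eq_getElem_cons_eraseIdx L p hplen
    rw [hLp] at h
    exact h
  · rw [hset, coe_set_eq_cons_eraseIdx L p hplen]


private lemma anti_of_step {f : ℕ → ℕ} {N : ℕ} (h : ∀ j, j < N → f (j+1) < f j) :
    ∀ k k', k < k' → k' < N → f k' < f k := by
  intro k k'
  induction k' with
  | zero => intro h1 _; omega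
  | succ j ih =>
    intro hkk' hk'
    rcases Nat.lt_or_ge k j with hlt | hge
    · exact lt_trans (h j (by omega)) (ih hlt (by omega))
    · have hkj : k = j := by omega
      subst hkj
      exact h k (by omega)

/-- The even case: from `θ_k(Λ)` to `θ_{k+1}(Λ)` (represented with first row of
`m₂ + 1` entries and second row of `m₂ + 1 − δ'` entries) a unique first-row entry
`α_k` becomes `α_k + 2` and a unique second-row entry `β_k` becomes `β_k − 2`;
the `α_k` share a parity and strictly increase, the `β_k` share a parity and strictly
decrease, and `α`'s and `β`'s have opposite parities. -/
theorem statement7 (n n' : ℕ) (δ : ℤ) (hpar : Even (n + n'))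
    (hτ : 0 ≤ tau n n' δ) (Λ : Symbol) (hΛ : InS n δ Λ)
    (hμ : 1 ≤ part Λ.Upsilon.1 0) (m2 : ℕ)
    (hm2 : Λ.Upsilon.2.card ≤ m2)
    (hm1 : (Λ.Upsilon.1.card : ℤ) ≤ (m2 : ℤ) + 1 - deltaPrime n n' δ)
    (T : ℕ → Symbol)
    (hT : T = fun k => symbolOfBip (deltaPrime n n' δ) (thetaBip n n' δ k Λ.Upsilon)
      (m2 + 1) (((m2 : ℤ) + 1 - deltaPrime n n' δ).toNat)) :
    ∃ α β : ℕ → ℕ,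
      (∀ k, k < part Λ.Upsilon.1 0 →
        α k ∈ (T k).A ∧ β k ∈ (T k).B ∧
        ((T (k + 1)).A : Multiset ℕ) = (α k + 2) ::ₘ (((T k).A : Multiset ℕ).erase (α k)) ∧
        ((T (k + 1)).B : Multiset ℕ) = (β k - 2) ::ₘ (((T k).B : Multiset ℕ).erase (β k))) ∧
      (∀ k, k < part Λ.Upsilon.1 0 → ∀ k', k' < part Λ.Upsilon.1 0 → α k % 2 = α k' % 2) ∧
      (∀ k k', k < k' → k' < part Λ.Upsilon.1 0 → α k < α k') ∧
      (∀ k, k < part Λ.Upsilon.1 0 → ∀ k', k' < part Λ.Upsilon.1 0 → β k % 2 = β k' % 2) ∧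
      (∀ k k', k < k' → k' < part Λ.Upsilon.1 0 → β k' < β k) ∧
      (∀ k, k < part Λ.Upsilon.1 0 → ∀ k', k' < part Λ.Upsilon.1 0 → α k % 2 ≠ β k' % 2) := by

  have hTA : ∀ k, (T k).A = List.ofFn (fun i : Fin (m2+1) =>
      2 * (part ((tauNat n n' δ + k) ::ₘ Λ.Upsilon.2) (i:ℕ) + (m2 + 1 - 1 - (i:ℕ)))
        + eps (deltaPrime n n' δ)) := by
    intro k
    rw [hT]
    simp only [symbolOfBip, thetaBip, if_pos hpar, part_strip]
  have hTB : ∀ k, (T k).B = List.ofFn (fun j : Fin (((m2:ℤ) + 1 - deltaPrime n n' δ).toNat) =>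
      2 * (part ((part Λ.Upsilon.1 0 - k) ::ₘ mtail Λ.Upsilon.1) (j:ℕ)
        + ((((m2:ℤ) + 1 - deltaPrime n n' δ).toNat) - 1 - (j:ℕ)))
        + (1 - eps (deltaPrime n n' δ))) := by
    intro k
    rw [hT]
    simp only [symbolOfBip, thetaBip, if_pos hpar, part_strip]
  have hpA : ∀ k, Multiset.card (Λ.Upsilon.2.filter (fun x => tauNat n n' δ + k < x)) < m2 + 1 := by
    intro k
    have h1 : Multiset.card (Λ.Upsilon.2.filter (fun x => tauNat n n' δ + k < x))
        ≤ Multiset.card Λ.Upsilon.2 := Multiset.card_le_card (Multiset.filter_le _ _)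
    omega
  have hmem : part Λ.Upsilon.1 0 ∈ Λ.Upsilon.1 := part_mem _ (by omega)
  have hcards : Multiset.card (mtail Λ.Upsilon.1) = Multiset.card Λ.Upsilon.1 - 1 := by
    rw [mtail, Multiset.card_erase_of_mem hmem]
    rfl
  have hcardpos : 0 < Multiset.card Λ.Upsilon.1 :=
    Multiset.card_pos.mpr (fun h0 => by simp [h0] at hmem)
  have hm'ge : Multiset.card Λ.Upsilon.1 ≤ ((m2:ℤ) + 1 - deltaPrime n n' δ).toNat := by
    refine (Int.le_toNat ?_).mpr hm1
    exact le_trans (Int.ofNat_nonneg _) hm1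
  have hpB : ∀ j, Multiset.card ((mtail Λ.Upsilon.1).filter (fun x => j < x))
      < ((m2:ℤ) + 1 - deltaPrime n n' δ).toNat := by
    intro j
    have h1 : Multiset.card ((mtail Λ.Upsilon.1).filter (fun x => j < x))
        ≤ Multiset.card (mtail Λ.Upsilon.1) := Multiset.card_le_card (Multiset.filter_le _ _)
    omega
  have heps : eps (deltaPrime n n' δ) ≤ 1 := by
    unfold eps
    split <;> omega
  set α : ℕ → ℕ := fun k =>
    2 * (tauNat n n' δ + k + (m2 + 1 - 1 -
      Multiset.card (Multiset.filter (fun x => tauNat n n' δ + k < x) Λ.Upsilon.2)))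
      + eps (deltaPrime n n' δ) with hα
  set β : ℕ → ℕ := fun k =>
    2 * (part Λ.Upsilon.1 0 - k + ((((m2:ℤ) + 1 - deltaPrime n n' δ).toNat) - 1 -
      Multiset.card (Multiset.filter (fun x => part Λ.Upsilon.1 0 - k - 1 < x) (mtail Λ.Upsilon.1))))
      + (1 - eps (deltaPrime n n' δ)) with hβ
  refine ⟨α, β, ?_, ?_, ?_, ?_, ?_, ?_⟩
  · intro k hk
    obtain ⟨C, hC1, hC2⟩ := row_step (m2+1) (eps (deltaPrime n n' δ)) Λ.Upsilon.2
      (tauNat n n' δ + k) (hpA k)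
    obtain ⟨D, hD1, hD2⟩ := row_step (((m2:ℤ) + 1 - deltaPrime n n' δ).toNat)
      (1 - eps (deltaPrime n n' δ)) (mtail Λ.Upsilon.1) (part Λ.Upsilon.1 0 - k - 1) (hpB _)
    have hadd : tauNat n n' δ + (k + 1) = tauNat n n' δ + k + 1 := by omega
    have hs1 : part Λ.Upsilon.1 0 - (k + 1) = part Λ.Upsilon.1 0 - k - 1 := by omega
    have hs2 : part Λ.Upsilon.1 0 - k = part Λ.Upsilon.1 0 - k - 1 + 1 := by omega
    have hA0 : ((T k).A : Multiset ℕ) = α k ::ₘ C := by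
      rw [hTA k]
      simp only [hα]
      exact hC1
    have hA1 : ((T (k+1)).A : Multiset ℕ) = (α k + 2) ::ₘ C := by
      rw [hTA (k+1), hadd]
      simp only [hα]
      exact hC2
    have hv2 : 2 * (part Λ.Upsilon.1 0 - k - 1 + ((((m2:ℤ) + 1 - deltaPrime n n' δ).toNat) - 1 -
        Multiset.card (Multiset.filter (fun x => part Λ.Upsilon.1 0 - k - 1 < x)
          (mtail Λ.Upsilon.1)))) + (1 - eps (deltaPrime n n' δ)) + 2 = β k := by
      simp only [hβ]
      omega
    have hv1 : 2 * (part Λ.Upsilon.1 0 - k - 1 + ((((m2:ℤ) + 1 - deltaPrime n n' δ).toNat) - 1 -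
        Multiset.card (Multiset.filter (fun x => part Λ.Upsilon.1 0 - k - 1 < x)
          (mtail Λ.Upsilon.1)))) + (1 - eps (deltaPrime n n' δ)) = β k - 2 := by
      simp only [hβ]
      omega
    have hB0 : ((T k).B : Multiset ℕ) = β k ::ₘ D := by
      rw [hTB k, hs2, ← hv2]
      exact hD2
    have hB1 : ((T (k+1)).B : Multiset ℕ) = (β k - 2) ::ₘ D := by
      rw [hTB (k+1), hs1, ← hv1]
      exact hD1
    refine ⟨?_, ?_, ?_, ?_⟩
    · rw [← Multiset.mem_coe, hA0]
      exact Multiset.mem_cons_self _ _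
    · rw [← Multiset.mem_coe, hB0]
      exact Multiset.mem_cons_self _ _
    · rw [hA1, hA0, Multiset.erase_cons_head]
    · rw [hB1, hB0, Multiset.erase_cons_head]
  · intro k _ k' _
    simp only [hα]
    omega
  · have hstep : ∀ k, α k < α (k+1) := by
      intro k
      have hm := filter_card_mono Λ.Upsilon.2 (fun x => tauNat n n' δ + (k+1) < x)
        (fun x => tauNat n n' δ + k < x) (fun x hx => by omega)
      have h1 := hpA k
      have h2 := hpA (k+1)
      simp only [hα]
      omega
    intro k k' hkk' _
    exact strictMono_nat_of_lt_succ hstep hkk'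
  · intro k _ k' _
    simp only [hβ]
    omega
  · have hstep : ∀ j, j < part Λ.Upsilon.1 0 → β (j+1) < β j := by
      intro j hj
      have hm := filter_card_mono (mtail Λ.Upsilon.1)
        (fun x => part Λ.Upsilon.1 0 - j - 1 < x)
        (fun x => part Λ.Upsilon.1 0 - (j+1) - 1 < x) (fun x hx => by omega)
      have h1 := hpB (part Λ.Upsilon.1 0 - j - 1)
      have h2 := hpB (part Λ.Upsilon.1 0 - (j+1) - 1)
      simp only [hβ]
      omega
    exact fun k k' h h' => anti_of_step hstep k k' h h'
  · intro k _ k' _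
    simp only [hα, hβ]
    omega


end PanUnitary
end

section
/- Assume τ ≥ 0. Then the map θ_0 : S_{n,δ} → S_{n',δ'} is injective. -/
namespace PanUnitary

section Lemmas

lemma strip_pos {μ : Multiset ℕ} : ∀ x ∈ strip μ, 0 < x := fun _ hx =>
  Multiset.of_mem_filter hx

lemma strip_eq_self {μ : Multiset ℕ} (h : ∀ x ∈ μ, 0 < x) : strip μ = μ :=
  Multiset.filter_eq_self.2 h

lemma strip_cons_erase {t : ℕ} {ν : Multiset ℕ} (h : ∀ x ∈ ν, 0 < x) :
    (strip (t ::ₘ ν)).erase t = ν := by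
  unfold strip
  rw [Multiset.filter_cons, show Multiset.filter (fun x => 0 < x) ν = ν from strip_eq_self h]
  rcases Nat.eq_zero_or_pos t with ht | ht
  · subst ht
    simp only [lt_self_iff_false, if_false, zero_add]
    exact Multiset.erase_of_notMem (fun hm => absurd (h 0 hm) (lt_irrefl 0))
  · rw [if_pos ht]
    simp [Multiset.singleton_add]

lemma part_zero_mem {μ : Multiset ℕ} (h0 : μ ≠ 0) : part μ 0 ∈ μ := by
  have hne : (μ.sort (· ≤ ·)).reverse ≠ [] := by
    simp only [ne_eq, List.reverse_eq_nil_iff, ← List.length_eq_zero_iff,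
      Multiset.length_sort, Multiset.card_eq_zero]
    simpa using h0
  have hlt : 0 < (μ.sort (· ≤ ·)).reverse.length := List.length_pos_iff.2 hne
  have : part μ 0 ∈ (μ.sort (· ≤ ·)).reverse := by
    rw [part, List.getD_eq_getElem _ _ hlt]
    exact List.getElem_mem _
  rw [List.mem_reverse, Multiset.mem_sort] at this
  exact this

lemma strip_head_cons_mtail {μ : Multiset ℕ} (h : ∀ x ∈ μ, 0 < x) :
    strip (part μ 0 ::ₘ mtail μ) = μ := by
  rcases eq_or_ne μ 0 with h0 | h0
  · subst h0
    simp [mtail, strip, part]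
  · rw [mtail, Multiset.cons_erase (part_zero_mem h0)]
    exact strip_eq_self h

end Lemmas
section Lemmas2

lemma strip_idem (μ : Multiset ℕ) : strip (strip μ) = strip μ :=
  strip_eq_self strip_pos

lemma defect_canonicalSymbol (δ : ℤ) (p : Multiset ℕ × Multiset ℕ) :
    (canonicalSymbol δ p).defect = δ := by
  simp only [canonicalSymbol, symbolOfBip, Symbol.defect, List.length_ofFn]
  have h1 : ((p.2.card : ℤ) + δ) ≤ (((p.2.card : ℤ) + δ).toNat : ℤ) := Int.self_le_toNat _
  have h2 : (((p.2.card : ℤ) + δ).toNat : ℕ) ≤ max p.1.card (((p.2.card : ℤ) + δ).toNat) :=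
    le_max_right _ _
  omega

lemma upsRow_symbolRow (g : ℕ → ℕ) (m e : ℕ) :
    upsRow (List.ofFn fun i : Fin m => 2 * (g i + (m - 1 - i)) + e) e =
      ((List.ofFn fun i : Fin m => g i : List ℕ) : Multiset ℕ) := by
  unfold upsRow
  congr 1
  apply List.ext_getElem
  · simp
  · intro i h1 h2
    simp only [List.getElem_mapIdx, List.getElem_ofFn, List.length_ofFn]
    have hi : i < m := by simpa using h2
    omega

lemma strip_ofFn_part (μ : Multiset ℕ) {m : ℕ} (hm : Multiset.card μ ≤ m) :
    strip ((List.ofFn fun i : Fin m => part μ i : List ℕ) : Multiset ℕ) = strip μ := by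
  set L : List ℕ := (μ.sort (· ≤ ·)).reverse with hL
  have hlen : L.length = Multiset.card μ := by simp [hL]
  have hlist : (List.ofFn fun i : Fin m => part μ i) = L ++ List.replicate (m - L.length) 0 := by
    apply List.ext_getElem
    · simp; omega
    · intro i h1 h2
      have hi : i < m := by simpa using h1
      rcases lt_or_ge i L.length with hc | hc
      · rw [List.getElem_ofFn, List.getElem_append_left hc, part, List.getD_eq_getElem _ _ hc]
      · rw [List.getElem_ofFn, List.getElem_append_right hc, part,
          List.getD_eq_default _ _ hc, List.getElem_replicate]
  rw [hlist]
  have : ((L ++ List.replicate (m - L.length) 0 : List ℕ) : Multiset ℕ)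
      = (L : Multiset ℕ) + (List.replicate (m - L.length) 0 : List ℕ) := by
    simp
  rw [this]
  unfold strip
  rw [Multiset.filter_add]
  have hrep : Multiset.filter (fun x => 0 < x)
      ((List.replicate (m - L.length) 0 : List ℕ) : Multiset ℕ) = 0 := by
    rw [Multiset.filter_eq_nil]
    intro a ha
    simp only [Multiset.mem_coe, List.mem_replicate] at ha
    omega
  rw [hrep, add_zero]
  congr 1
  rw [hL, Multiset.coe_reverse, Multiset.sort_eq]

lemma Upsilon_symbolOfBip (δ : ℤ) (p : Multiset ℕ × Multiset ℕ) (m1 m2 : ℕ)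
    (h1 : Multiset.card p.1 ≤ m1) (h2 : Multiset.card p.2 ≤ m2)
    (hd : (symbolOfBip δ p m1 m2).defect = δ) :
    (symbolOfBip δ p m1 m2).Upsilon = (strip p.1, strip p.2) := by
  rw [Symbol.Upsilon, hd]
  show (strip (upsRow (List.ofFn fun i : Fin m1 =>
      2 * (part p.1 i + (m1 - 1 - i)) + eps δ) (eps δ)),
    strip (upsRow (List.ofFn fun j : Fin m2 =>
      2 * (part p.2 j + (m2 - 1 - j)) + (1 - eps δ)) (1 - eps δ))) = _
  rw [upsRow_symbolRow, upsRow_symbolRow, strip_ofFn_part _ h1, strip_ofFn_part _ h2]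

lemma Upsilon_canonicalSymbol (δ : ℤ) (p : Multiset ℕ × Multiset ℕ) :
    (canonicalSymbol δ p).Upsilon = (strip p.1, strip p.2) := by
  have h1 : ((p.2.card : ℤ) + δ) ≤ ((((p.2.card : ℤ) + δ).toNat : ℕ) : ℤ) := Int.self_le_toNat _
  have h2 : (((p.2.card : ℤ) + δ).toNat : ℕ) ≤ max p.1.card (((p.2.card : ℤ) + δ).toNat) :=
    le_max_right _ _
  exact Upsilon_symbolOfBip δ p _ _ (le_max_left _ _) (by omega) (defect_canonicalSymbol δ p)

end Lemmas2
lemma Upsilon_fst_pos (Λ : Symbol) : ∀ x ∈ Λ.Upsilon.1, 0 < x := by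
  simp only [Symbol.Upsilon]; exact strip_pos

lemma Upsilon_snd_pos (Λ : Symbol) : ∀ x ∈ Λ.Upsilon.2, 0 < x := by
  simp only [Symbol.Upsilon]; exact strip_pos

lemma thetaBip_inj (n n' : ℕ) (δ : ℤ) (p q : Multiset ℕ × Multiset ℕ)
    (hp1 : ∀ x ∈ p.1, 0 < x) (hp2 : ∀ x ∈ p.2, 0 < x)
    (hq1 : ∀ x ∈ q.1, 0 < x) (hq2 : ∀ x ∈ q.2, 0 < x)
    (h : thetaBip n n' δ 0 p = thetaBip n n' δ 0 q) : p = q := by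
  by_cases hpar : Even (n + n')
  · simp only [thetaBip, if_pos hpar] at h
    have h1 := congrArg Prod.fst h
    have h2 := congrArg Prod.snd h
    simp only [Nat.sub_zero] at h1 h2
    rw [strip_head_cons_mtail hp1, strip_head_cons_mtail hq1] at h2
    have h1' := congrArg (fun s => Multiset.erase s (tauNat n n' δ + 0)) h1
    simp only [strip_cons_erase hp2, strip_cons_erase hq2] at h1'
    exact Prod.ext h2 h1'
  · simp only [thetaBip, if_neg hpar] at h
    have h1 := congrArg Prod.fst h
    have h2 := congrArg Prod.snd h
    simp only [Nat.sub_zero] at h1 h2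
    rw [strip_head_cons_mtail hp2, strip_head_cons_mtail hq2] at h1
    have h2' := congrArg (fun s => Multiset.erase s (tauNat n n' δ + 0)) h2
    simp only [strip_cons_erase hp1, strip_cons_erase hq1] at h2'
    exact Prod.ext h2' h1

lemma strip_thetaBip (n n' : ℕ) (δ : ℤ) (k : ℕ) (p : Multiset ℕ × Multiset ℕ) :
    (strip (thetaBip n n' δ k p).1, strip (thetaBip n n' δ k p).2) = thetaBip n n' δ k p := by
  by_cases hpar : Even (n + n') <;>
    simp only [thetaBip, if_pos, if_neg, hpar, ite_true, ite_false, strip_idem]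

/-- If `τ ≥ 0`, the map `θ_0 : S_{n,δ} → S_{n',δ'}` is injective (on classes). -/
theorem statement9 (n n' : ℕ) (δ : ℤ) (hτ : 0 ≤ tau n n' δ) :
    ∀ Λ₁ Λ₂ : Symbol, InS n δ Λ₁ → InS n δ Λ₂ →
      (thetaSymbol n n' δ 0 Λ₁).Equiv (thetaSymbol n n' δ 0 Λ₂) → Λ₁.Equiv Λ₂ := by
  intro Λ₁ Λ₂ h1 h2 heq
  obtain ⟨-, hU⟩ := heq
  rw [thetaSymbol, thetaSymbol, Upsilon_canonicalSymbol, Upsilon_canonicalSymbol,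
    strip_thetaBip, strip_thetaBip] at hU
  have hups : Λ₁.Upsilon = Λ₂.Upsilon :=
    thetaBip_inj n n' δ _ _ (Upsilon_fst_pos Λ₁) (Upsilon_snd_pos Λ₁)
      (Upsilon_fst_pos Λ₂) (Upsilon_snd_pos Λ₂) hU
  exact ⟨by rw [h1.2.1.2.2.1, h2.2.1.2.2.1], hups⟩

end PanUnitary
end
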